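/- Let C be a symmetrizable generalized Cartan matrix of Dynkin type (i.e., the quadratic form q_C is positive definite) and let c = c⁺ = sₙ⋯s₁ be the Coxeter transformation on ℤⁿ. Then for every nonzero vector x ∈ ℕⁿ with x > 0 there exists s ≥ 0 such that cˢ(x) > 0 but c^{s+1}(x) is not ≥ 0 componentwise, and similarly there exists t ≥ 0 such that c^{−t}(x) > 0 but c^{−t−1}(x) is not ≥ 0. -/

import Mathlib

/-- The quadratic form associated to a symmetrizable generalized Cartan matrix. -/
def cartanQuadForm (n : ℕ) (C : Matrix (Fin n) (Fin n) ℤ) (c : Fin n → ℤ)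
    (x : Fin n → ℤ) : ℤ :=
  (∑ i, c i * x i ^ 2) -
    ∑ p ∈ Finset.univ.filter (fun p : Fin n × Fin n => p.1 < p.2),
      c p.1 * |C p.1 p.2| * x p.1 * x p.2

/-- The simple reflection `sᵢ : ℤⁿ → ℤⁿ`. -/
def simpleRefl (n : ℕ) (C : Matrix (Fin n) (Fin n) ℤ) (i : Fin n) (x : Fin n → ℤ) :
    Fin n → ℤ :=
  fun l => x l - (if l = i then ∑ j, C i j * x j else 0)

/-- The Coxeter transformation `c⁺ = sₙ⋯s₁` (`s₁` applied first). -/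
def coxeterPlus (n : ℕ) (C : Matrix (Fin n) (Fin n) ℤ) (x : Fin n → ℤ) : Fin n → ℤ :=
  (List.finRange n).foldl (fun y i => simpleRefl n C i y) x

/-- The inverse Coxeter transformation `c⁻ = s₁⋯sₙ` (`sₙ` applied first). -/
def coxeterMinus (n : ℕ) (C : Matrix (Fin n) (Fin n) ℤ) (x : Fin n → ℤ) : Fin n → ℤ :=
  (List.finRange n).foldr (fun i y => simpleRefl n C i y) x


namespace CoxAux
open Matrix

variable (n : ℕ) (C : Matrix (Fin n) (Fin n) ℤ) (c : Fin n → ℤ)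

/-- bilinear form -/
def B (x y : Fin n → ℤ) : ℤ := ∑ i, ∑ j, c i * C i j * x i * y j

theorem B_symm (hsym : ∀ i j, c i * C i j = c j * C j i) (x y : Fin n → ℤ) :
    B n C c x y = B n C c y x := by
  rw [B, B, Finset.sum_comm]
  refine Finset.sum_congr rfl fun j _ => Finset.sum_congr rfl fun i _ => ?_
  rw [show c i * C i j * x i * y j = (c i * C i j) * (x i * y j) by ring, hsym i j]
  ring

theorem two_q_eq_B (hdiag : ∀ i, C i i = 2)
    (hoff : ∀ i j, i ≠ j → C i j ≤ 0)
    (hsym : ∀ i j, c i * C i j = c j * C j i) (x : Fin n → ℤ) :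
    2 * cartanQuadForm n C c x = B n C c x x := by
  classical
  set f : Fin n × Fin n → ℤ := fun p => c p.1 * C p.1 p.2 * x p.1 * x p.2 with hfdef
  have hf : ∀ p : Fin n × Fin n, f p = f p.swap := by
    intro p
    simp only [hfdef, Prod.swap]
    rw [show c p.1 * C p.1 p.2 * x p.1 * x p.2 = (c p.1 * C p.1 p.2) * (x p.1 * x p.2) by ring,
      hsym p.1 p.2]
    ring
  have hB : B n C c x x = ∑ p : Fin n × Fin n, f p := by
    rw [B, ← Finset.sum_product']
    rfl
  have hdiagset : Finset.univ.filter (fun p : Fin n × Fin n => p.1 = p.2)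
      = Finset.univ.image (fun i : Fin n => (i, i)) := by
    ext p
    simp only [Finset.mem_filter, Finset.mem_univ, true_and, Finset.mem_image]
    constructor
    · rintro h; exact ⟨p.1, by simp [Prod.ext_iff, h]⟩
    · rintro ⟨i, rfl⟩; rfl
  have hdsum : ∑ p ∈ Finset.univ.filter (fun p : Fin n × Fin n => p.1 = p.2), f p
      = ∑ i, f (i, i) := by
    rw [hdiagset, Finset.sum_image (by intro a _ b _ h; simpa [Prod.ext_iff] using h)]
  have hgtset : Finset.univ.filter (fun p : Fin n × Fin n => p.2 < p.1)
      = (Finset.univ.filter (fun p : Fin n × Fin n => p.1 < p.2)).image Prod.swap := by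
    ext p
    simp only [Finset.mem_filter, Finset.mem_univ, true_and, Finset.mem_image]
    constructor
    · rintro h; exact ⟨p.swap, h, by simp⟩
    · rintro ⟨q, hq, rfl⟩; exact hq
  have hgsum : ∑ p ∈ Finset.univ.filter (fun p : Fin n × Fin n => p.2 < p.1), f p
      = ∑ p ∈ Finset.univ.filter (fun p : Fin n × Fin n => p.1 < p.2), f p := by
    rw [hgtset, Finset.sum_image (by
      intro a _ b _ h
      have := Prod.ext_iff.mp h
      exact Prod.ext this.2 this.1)]
    exact Finset.sum_congr rfl fun p _ => (hf p).symm
  have hsplit : ∑ p : Fin n × Fin n, f p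
      = (∑ p ∈ Finset.univ.filter (fun p : Fin n × Fin n => p.1 < p.2), f p)
        + ((∑ i, f (i, i))
          + ∑ p ∈ Finset.univ.filter (fun p : Fin n × Fin n => p.1 < p.2), f p) := by
    rw [← Finset.sum_filter_add_sum_filter_not Finset.univ
      (fun p : Fin n × Fin n => p.1 < p.2) f]
    congr 1
    rw [← Finset.sum_filter_add_sum_filter_not
      (Finset.univ.filter (fun p : Fin n × Fin n => ¬ p.1 < p.2))
      (fun p : Fin n × Fin n => p.1 = p.2) f]
    congr 1
    · rw [← hdsum, Finset.filter_filter]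
      congr 1
      ext p
      simp only [Finset.mem_filter, Finset.mem_univ, true_and]
      constructor
      · rintro ⟨_, h⟩; exact h
      · rintro h; exact ⟨by simp [h], h⟩
    · rw [← hgsum, Finset.filter_filter]
      congr 1
      ext p
      simp only [Finset.mem_filter, Finset.mem_univ, true_and]
      constructor
      · rintro ⟨h1, h2⟩; rcases lt_trichotomy p.1 p.2 with h | h | h
        · exact absurd h h1
        · exact absurd h h2
        · exact h
      · rintro h; exact ⟨fun h' => absurd h (not_lt.mpr h'.le), fun h' => by simp [h'] at h⟩
  have hdval : ∀ i : Fin n, f (i, i) = 2 * (c i * x i ^ 2) := by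
    intro i; simp only [hfdef, hdiag i]; ring
  have hltval : ∀ p : Fin n × Fin n, p.1 < p.2 →
      f p = -(c p.1 * |C p.1 p.2| * x p.1 * x p.2) := by
    intro p hp
    have : |C p.1 p.2| = -(C p.1 p.2) := abs_of_nonpos (hoff _ _ (ne_of_lt hp))
    simp only [hfdef, this]; ring
  rw [hB, hsplit, cartanQuadForm]
  rw [Finset.sum_congr rfl fun i _ => hdval i,
    Finset.sum_congr rfl fun p hp => hltval p (by simpa using hp)]
  rw [← Finset.mul_sum]
  ring_nf
  rw [Finset.sum_neg_distrib]
  ring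

theorem B_pos (hdiag : ∀ i, C i i = 2)
    (hoff : ∀ i j, i ≠ j → C i j ≤ 0)
    (hsym : ∀ i j, c i * C i j = c j * C j i)
    (hposdef : ∀ x : Fin n → ℤ, x ≠ 0 → 0 < cartanQuadForm n C c x)
    (x : Fin n → ℤ) (hx : x ≠ 0) : 0 < B n C c x x := by
  rw [← two_q_eq_B n C c hdiag hoff hsym x]
  have := hposdef x hx
  omega

theorem B_nonneg (hdiag : ∀ i, C i i = 2)
    (hoff : ∀ i j, i ≠ j → C i j ≤ 0)
    (hsym : ∀ i j, c i * C i j = c j * C j i)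
    (hposdef : ∀ x : Fin n → ℤ, x ≠ 0 → 0 < cartanQuadForm n C c x)
    (x : Fin n → ℤ) : 0 ≤ B n C c x x := by
  by_cases hx : x = 0
  · subst hx
    simp [B, mul_zero]
  · exact (B_pos n C c hdiag hoff hsym hposdef x hx).le

theorem B_add_left (x y z : Fin n → ℤ) :
    B n C c (x + y) z = B n C c x z + B n C c y z := by
  rw [B, B, B, ← Finset.sum_add_distrib]
  refine Finset.sum_congr rfl fun i _ => ?_
  rw [← Finset.sum_add_distrib]
  refine Finset.sum_congr rfl fun j _ => ?_
  simp only [Pi.add_apply]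
  ring

theorem B_smul_left (a : ℤ) (x z : Fin n → ℤ) :
    B n C c (a • x) z = a * B n C c x z := by
  rw [B, B, Finset.mul_sum]
  refine Finset.sum_congr rfl fun i _ => ?_
  rw [Finset.mul_sum]
  refine Finset.sum_congr rfl fun j _ => ?_
  simp only [Pi.smul_apply, smul_eq_mul]
  ring

theorem B_add_right (x y z : Fin n → ℤ) :
    B n C c z (x + y) = B n C c z x + B n C c z y := by
  rw [B, B, B, ← Finset.sum_add_distrib]
  refine Finset.sum_congr rfl fun i _ => ?_
  rw [← Finset.sum_add_distrib]
  refine Finset.sum_congr rfl fun j _ => ?_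
  simp only [Pi.add_apply]
  ring

theorem B_smul_right (a : ℤ) (x z : Fin n → ℤ) :
    B n C c z (a • x) = a * B n C c z x := by
  rw [B, B, Finset.mul_sum]
  refine Finset.sum_congr rfl fun i _ => ?_
  rw [Finset.mul_sum]
  refine Finset.sum_congr rfl fun j _ => ?_
  simp only [Pi.smul_apply, smul_eq_mul]
  ring

theorem B_cauchy (hdiag : ∀ i, C i i = 2)
    (hoff : ∀ i j, i ≠ j → C i j ≤ 0)
    (hsym : ∀ i j, c i * C i j = c j * C j i)
    (hposdef : ∀ x : Fin n → ℤ, x ≠ 0 → 0 < cartanQuadForm n C c x)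
    (u v : Fin n → ℤ) :
    B n C c u v ^ 2 ≤ B n C c u u * B n C c v v := by
  by_cases hu : u = 0
  · subst hu
    simp [B, mul_zero]
  · have ha : 0 < B n C c u u := B_pos n C c hdiag hoff hsym hposdef u hu
    set a := B n C c u u with hadef
    set b := B n C c u v with hbdef
    have hw : 0 ≤ B n C c (a • v - b • u) (a • v - b • u) :=
      B_nonneg n C c hdiag hoff hsym hposdef _
    have hexp : B n C c (a • v - b • u) (a • v - b • u)
        = a * (a * B n C c v v - b ^ 2) := by
      have h1 : a • v - b • u = a • v + (-b) • u := by
        ext l; simp; ring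
      rw [h1]
      simp only [B_add_left, B_add_right, B_smul_left, B_smul_right]
      rw [B_symm n C c hsym v u, ← hbdef, ← hadef]
      ring
    rw [hexp] at hw
    nlinarith

/-- The symmetrized Cartan matrix. -/
def Smat : Matrix (Fin n) (Fin n) ℤ := Matrix.of fun i j => c i * C i j

theorem B_eq_mulVec (u v : Fin n → ℤ) :
    B n C c u v = ∑ i, u i * (Smat n C c *ᵥ v) i := by
  rw [B]
  refine Finset.sum_congr rfl fun i _ => ?_
  rw [Matrix.mulVec, dotProduct, Finset.mul_sum]
  refine Finset.sum_congr rfl fun j _ => ?_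
  simp [Smat]
  ring

theorem Smat_det_ne_zero (hdiag : ∀ i, C i i = 2)
    (hoff : ∀ i j, i ≠ j → C i j ≤ 0)
    (hsym : ∀ i j, c i * C i j = c j * C j i)
    (hposdef : ∀ x : Fin n → ℤ, x ≠ 0 → 0 < cartanQuadForm n C c x) :
    (Smat n C c).det ≠ 0 := by
  intro hdet
  obtain ⟨v, hv0, hv⟩ := (Matrix.exists_mulVec_eq_zero_iff).mpr hdet
  have : B n C c v v = 0 := by
    rw [B_eq_mulVec, hv]
    simp
  have := B_pos n C c hdiag hoff hsym hposdef v hv0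
  omega

theorem abs_le_sq_int (a : ℤ) : |a| ≤ a ^ 2 := by
  rcases eq_or_ne a 0 with rfl | h
  · simp
  · nlinarith [abs_nonneg a, sq_abs a, Int.one_le_abs h]

theorem exists_bound (hdiag : ∀ i, C i i = 2)
    (hoff : ∀ i j, i ≠ j → C i j ≤ 0)
    (hsym : ∀ i j, c i * C i j = c j * C j i)
    (hposdef : ∀ x : Fin n → ℤ, x ≠ 0 → 0 < cartanQuadForm n C c x)
    (x : Fin n → ℤ) :
    ∃ K : ℤ, ∀ y : Fin n → ℤ, B n C c y y = B n C c x x → ∀ l, |y l| ≤ K := by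
  classical
  set S := Smat n C c with hS
  set A := S.adjugate with hA
  set D := S.det with hD
  have hDne : D ≠ 0 := Smat_det_ne_zero n C c hdiag hoff hsym hposdef
  refine ⟨∑ l, B n C c (fun j => A l j) (fun j => A l j) * B n C c x x, ?_⟩
  intro y hy l
  have hDy : A *ᵥ (S *ᵥ y) = D • y := by
    rw [Matrix.mulVec_mulVec, Matrix.adjugate_mul, Matrix.smul_mulVec,
      Matrix.one_mulVec]
  have hcoord : D * y l = B n C c (fun j => A l j) y := by
    rw [B_eq_mulVec]
    have := congrFun hDy l
    simp only [Pi.smul_apply, smul_eq_mul] at this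
    rw [← this]
    rfl
  have hcs : (D * y l) ^ 2
      ≤ B n C c (fun j => A l j) (fun j => A l j) * B n C c x x := by
    rw [hcoord, ← hy]
    exact B_cauchy n C c hdiag hoff hsym hposdef _ y
  have hterm : B n C c (fun j => A l j) (fun j => A l j) * B n C c x x
      ≤ ∑ l', B n C c (fun j => A l' j) (fun j => A l' j) * B n C c x x := by
    refine Finset.single_le_sum (f := fun l' => B n C c (fun j => A l' j) (fun j => A l' j) * B n C c x x) (fun l' _ => ?_) (Finset.mem_univ l)
    exact mul_nonneg (B_nonneg n C c hdiag hoff hsym hposdef _)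
      (B_nonneg n C c hdiag hoff hsym hposdef _)
  have hD1 : 1 ≤ D ^ 2 := by
    have := Int.one_le_abs hDne
    nlinarith [sq_abs D]
  have h1 : y l ^ 2 ≤ (D * y l) ^ 2 := by nlinarith [sq_nonneg (y l)]
  have h2 := abs_le_sq_int (y l)
  omega

/-- standard basis vector -/
def e (i : Fin n) : Fin n → ℤ := fun l => if l = i then 1 else 0

theorem B_basis_left (i : Fin n) (v : Fin n → ℤ) :
    B n C c (e n i) v = c i * ∑ j, C i j * v j := by
  rw [B]
  rw [Finset.sum_eq_single i]
  · rw [Finset.mul_sum]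
    refine Finset.sum_congr rfl fun j _ => ?_
    simp [e]
    ring
  · intro k _ hk
    refine Finset.sum_eq_zero fun j _ => ?_
    simp [e, hk]
  · intro h
    exact absurd (Finset.mem_univ i) h

theorem B_basis_right (hsym : ∀ i j, c i * C i j = c j * C j i)
    (i : Fin n) (v : Fin n → ℤ) :
    B n C c v (e n i) = c i * ∑ j, C i j * v j := by
  rw [B_symm n C c hsym, B_basis_left]

theorem B_basis_basis (hdiag : ∀ i, C i i = 2) (i : Fin n) :
    B n C c (e n i) (e n i) = 2 * c i := by
  rw [B_basis_left, Finset.sum_eq_single i]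
  · simp [e, hdiag i]
    ring
  · intro k _ hk
    simp [e, hk]
  · intro h
    exact absurd (Finset.mem_univ i) h

theorem simpleRefl_eq (i : Fin n) (v : Fin n → ℤ) :
    simpleRefl n C i v = v + (-(∑ j, C i j * v j)) • e n i := by
  funext l
  simp only [simpleRefl, Pi.add_apply, Pi.smul_apply, e, smul_eq_mul]
  split
  · ring
  · ring

theorem B_simpleRefl (hdiag : ∀ i, C i i = 2)
    (hsym : ∀ i j, c i * C i j = c j * C j i)
    (i : Fin n) (v : Fin n → ℤ) :
    B n C c (simpleRefl n C i v) (simpleRefl n C i v) = B n C c v v := by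
  rw [simpleRefl_eq]
  set lam := ∑ j, C i j * v j with hlam
  simp only [B_add_left, B_add_right, B_smul_left, B_smul_right]
  rw [B_basis_left, B_basis_right n C c hsym, B_basis_basis n C c hdiag, ← hlam]
  ring

theorem simpleRefl_invol (hdiag : ∀ i, C i i = 2) (i : Fin n) (v : Fin n → ℤ) :
    simpleRefl n C i (simpleRefl n C i v) = v := by
  have hlam : (∑ j, C i j * simpleRefl n C i v j) = -(∑ j, C i j * v j) := by
    simp only [simpleRefl, mul_sub]
    rw [Finset.sum_sub_distrib]
    have : (∑ j, C i j * if j = i then ∑ k, C i k * v k else 0)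
        = 2 * ∑ k, C i k * v k := by
      rw [Finset.sum_eq_single i]
      · simp [hdiag i]
      · intro k _ hk
        simp [hk]
      · intro h
        exact absurd (Finset.mem_univ i) h
    rw [this]
    ring
  funext l
  simp only [simpleRefl] at hlam ⊢
  split
  · rename_i h
    subst h
    rw [hlam]
    ring
  · ring

theorem simpleRefl_add (i : Fin n) (v w : Fin n → ℤ) :
    simpleRefl n C i (v + w) = simpleRefl n C i v + simpleRefl n C i w := by
  funext l
  simp only [simpleRefl, Pi.add_apply, mul_add]
  rw [Finset.sum_add_distrib]
  split
  · ring
  · ring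

theorem coxeterMinus_coxeterPlus (hdiag : ∀ i, C i i = 2) (v : Fin n → ℤ) :
    coxeterMinus n C (coxeterPlus n C v) = v := by
  rw [coxeterMinus, coxeterPlus]
  generalize List.finRange n = L
  induction L generalizing v with
  | nil => rfl
  | cons a t ih =>
    simp only [List.foldl_cons, List.foldr_cons]
    rw [ih (simpleRefl n C a v), simpleRefl_invol n C hdiag]

theorem coxeterPlus_coxeterMinus (hdiag : ∀ i, C i i = 2) (v : Fin n → ℤ) :
    coxeterPlus n C (coxeterMinus n C v) = v := by
  rw [coxeterMinus, coxeterPlus]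
  generalize List.finRange n = L
  induction L generalizing v with
  | nil => rfl
  | cons a t ih =>
    simp only [List.foldl_cons, List.foldr_cons]
    rw [simpleRefl_invol n C hdiag, ih]

theorem coxeterPlus_add (v w : Fin n → ℤ) :
    coxeterPlus n C (v + w) = coxeterPlus n C v + coxeterPlus n C w := by
  rw [coxeterPlus, coxeterPlus, coxeterPlus]
  generalize List.finRange n = L
  induction L generalizing v w with
  | nil => rfl
  | cons a t ih =>
    simp only [List.foldl_cons]
    rw [simpleRefl_add, ih]

theorem coxeterMinus_add (v w : Fin n → ℤ) :
    coxeterMinus n C (v + w) = coxeterMinus n C v + coxeterMinus n C w := by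
  rw [coxeterMinus, coxeterMinus, coxeterMinus]
  generalize List.finRange n = L
  induction L generalizing v w with
  | nil => rfl
  | cons a t ih =>
    simp only [List.foldr_cons]
    rw [ih, simpleRefl_add]

theorem B_coxeterPlus (hdiag : ∀ i, C i i = 2)
    (hsym : ∀ i j, c i * C i j = c j * C j i) (v : Fin n → ℤ) :
    B n C c (coxeterPlus n C v) (coxeterPlus n C v) = B n C c v v := by
  rw [coxeterPlus]
  generalize List.finRange n = L
  induction L generalizing v with
  | nil => rfl
  | cons a t ih =>
    simp only [List.foldl_cons]
    rw [ih (simpleRefl n C a v), B_simpleRefl n C c hdiag hsym]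

theorem B_coxeterMinus (hdiag : ∀ i, C i i = 2)
    (hsym : ∀ i j, c i * C i j = c j * C j i) (v : Fin n → ℤ) :
    B n C c (coxeterMinus n C v) (coxeterMinus n C v) = B n C c v v := by
  rw [coxeterMinus]
  generalize List.finRange n = L
  induction L generalizing v with
  | nil => rfl
  | cons a t ih =>
    simp only [List.foldr_cons]
    rw [B_simpleRefl n C c hdiag hsym, ih]

theorem coxeterPlus_fixed_eq_zero (hdiag : ∀ i, C i i = 2)
    (hoff : ∀ i j, i ≠ j → C i j ≤ 0)
    (hsym : ∀ i j, c i * C i j = c j * C j i)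
    (hposdef : ∀ x : Fin n → ℤ, x ≠ 0 → 0 < cartanQuadForm n C c x)
    (y : Fin n → ℤ) (hy : coxeterPlus n C y = y) : y = 0 := by
  classical
  by_contra hy0
  set z : ℕ → Fin n → ℤ :=
    fun k => ((List.finRange n).take k).foldl (fun v i => simpleRefl n C i v) y with hz
  have hz0 : z 0 = y := rfl
  have hzn : z n = y := by
    rw [hz]
    simp only []
    rw [show (List.finRange n).take n = List.finRange n from
      List.take_of_length_le (by simp)]
    exact hy
  have hstep : ∀ k (hk : k < n), z (k + 1) = simpleRefl n C ⟨k, hk⟩ (z k) := by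
    intro k hk
    rw [hz]
    simp only []
    rw [List.take_succ]
    have hget : (List.finRange n)[k]? = some ⟨k, hk⟩ := by
      rw [List.getElem?_eq_getElem (by simpa using hk)]
      simp
    rw [hget]
    simp [List.foldl_append]
  have hstab : ∀ (l : Fin n) (m : ℕ), l.val < m → m ≤ n → z m l = z (l.val + 1) l := by
    intro l m
    induction m with
    | zero => omega
    | succ m' ih =>
      intro hlm hmn
      rcases Nat.lt_or_ge l.val m' with h | h
      · have hm'n : m' < n := by omega
        rw [hstep m' hm'n]
        have hne : l ≠ (⟨m', hm'n⟩ : Fin n) := by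
          intro hcon
          rw [hcon] at h
          exact absurd h (lt_irrefl _)
        simp only [simpleRefl, if_neg hne, sub_zero]
        exact ih h (by omega)
      · have : l.val = m' := by omega
        rw [← this]
  have hall : ∀ k, k ≤ n → z k = y := by
    intro k
    induction k with
    | zero => intro _; exact hz0
    | succ k ih =>
      intro hk1
      have hkn : k < n := hk1
      have hzk : z k = y := ih (le_of_lt hkn)
      have hlam : (∑ j, C ⟨k, hkn⟩ j * y j) = 0 := by
        have h1 : y ⟨k, hkn⟩ = z (k + 1) ⟨k, hkn⟩ := by
          rw [← hzn]
          have h := hstab ⟨k, hkn⟩ n hkn le_rfl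
          simpa using h
        rw [hstep k hkn, hzk] at h1
        simp [simpleRefl] at h1
        omega
      rw [hstep k hkn, hzk]
      funext l
      simp only [simpleRefl]
      split
      · rename_i h
        rw [h, hlam]
        ring
      · ring
  have hrows : ∀ i : Fin n, (∑ j, C i j * y j) = 0 := by
    intro i
    have h1 : z (i.val + 1) = simpleRefl n C i (z i.val) := by
      have h := hstep i.val i.isLt
      rwa [show (⟨i.val, i.isLt⟩ : Fin n) = i from Fin.eta i i.isLt] at h
    rw [hall (i.val + 1) i.isLt, hall i.val (le_of_lt i.isLt)] at h1
    have h2 := congrFun h1 i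
    simp [simpleRefl] at h2
    omega
  have hByy : B n C c y y = 0 := by
    rw [B]
    refine Finset.sum_eq_zero fun i _ => ?_
    have : (∑ j, c i * C i j * y i * y j) = c i * y i * ∑ j, C i j * y j := by
      rw [Finset.mul_sum]
      exact Finset.sum_congr rfl fun j _ => by ring
    rw [this, hrows i, mul_zero]
  have := B_pos n C c hdiag hoff hsym hposdef y hy0
  omega

theorem coxeterMinus_fixed_eq_zero (hdiag : ∀ i, C i i = 2)
    (hoff : ∀ i j, i ≠ j → C i j ≤ 0)
    (hsym : ∀ i j, c i * C i j = c j * C j i)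
    (hposdef : ∀ x : Fin n → ℤ, x ≠ 0 → 0 < cartanQuadForm n C c x)
    (y : Fin n → ℤ) (hy : coxeterMinus n C y = y) : y = 0 := by
  refine coxeterPlus_fixed_eq_zero n C c hdiag hoff hsym hposdef y ?_
  conv_lhs => rw [← hy]
  exact coxeterPlus_coxeterMinus n C hdiag y

theorem main_half (hdiag : ∀ i, C i i = 2)
    (hoff : ∀ i j, i ≠ j → C i j ≤ 0)
    (hsym : ∀ i j, c i * C i j = c j * C j i)
    (hposdef : ∀ x : Fin n → ℤ, x ≠ 0 → 0 < cartanQuadForm n C c x)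
    (f : (Fin n → ℤ) → (Fin n → ℤ))
    (hadd : ∀ v w, f (v + w) = f v + f w)
    (hinj : Function.Injective f)
    (hBf : ∀ v, B n C c (f v) (f v) = B n C c v v)
    (hfix : ∀ y, f y = y → y = 0)
    (x : Fin n → ℤ) (hx0 : x ≠ 0) (hxnn : ∀ l, 0 ≤ x l) :
    ∃ s : ℕ, (∀ l, 0 ≤ f^[s] x l) ∧ f^[s] x ≠ 0 ∧ ¬ (∀ l, 0 ≤ f^[s + 1] x l) := by
  classical
  have hf0 : f 0 = 0 := by
    have := hadd 0 0
    rw [add_zero] at this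
    exact left_eq_add.mp this
  by_contra hcon
  push_neg at hcon
  have hne : ∀ s, f^[s] x ≠ 0 := by
    intro s h0
    exact hx0 ((hinj.iterate s) (h0.trans (Function.iterate_fixed hf0 s).symm))
  have hnn : ∀ s, ∀ l, 0 ≤ f^[s] x l := by
    intro s
    induction s with
    | zero => exact hxnn
    | succ s ih => exact hcon s ih (hne s)
  obtain ⟨K, hK⟩ := exists_bound n C c hdiag hoff hsym hposdef x
  have hBiter : ∀ s, B n C c (f^[s] x) (f^[s] x) = B n C c x x := by
    intro s
    induction s with
    | zero => rfl
    | succ s ih =>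
      rw [Function.iterate_succ_apply', hBf, ih]
  have hbd : ∀ s l, f^[s] x l ∈ Set.Icc (-K) K := by
    intro s l
    have := hK (f^[s] x) (hBiter s) l
    constructor
    · have := neg_abs_le (f^[s] x l)
      omega
    · have := le_abs_self (f^[s] x l)
      omega
  set g : ℕ → (Fin n → Set.Icc (-K) K) := fun s l => ⟨f^[s] x l, hbd s l⟩ with hg
  obtain ⟨A', B', hAB, hgab⟩ := Finite.exists_ne_map_eq_of_infinite g
  have heq : f^[A'] x = f^[B'] x := by
    funext l
    exact Subtype.ext_iff.mp (congrFun hgab l)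
  -- wlog A' < B'
  obtain ⟨A, Bb, hlt, heq⟩ : ∃ A Bb, A < Bb ∧ f^[A] x = f^[Bb] x := by
    rcases hAB.lt_or_gt with h | h
    · exact ⟨A', B', h, heq⟩
    · exact ⟨B', A', h, heq.symm⟩
  set p := Bb - A with hp
  have hppos : 0 < p := by omega
  have hper : f^[p] x = x := by
    refine hinj.iterate A ?_
    have h1 : f^[A] (f^[p] x) = f^[A + p] x := (Function.iterate_add_apply f A p x).symm
    have h2 : A + p = Bb := by omega
    rw [h1, h2, ← heq]
  have hfsum : ∀ (m : ℕ) (gg : ℕ → Fin n → ℤ),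
      f (∑ s ∈ Finset.range m, gg s) = ∑ s ∈ Finset.range m, f (gg s) := by
    intro m gg
    induction m with
    | zero => simpa using hf0
    | succ m ih =>
      rw [Finset.sum_range_succ, Finset.sum_range_succ, hadd, ih]
  set y : Fin n → ℤ := ∑ s ∈ Finset.range p, f^[s] x with hy
  have hfy : f y = y := by
    rw [hy, hfsum]
    have hstep : ∀ s, f (f^[s] x) = f^[s + 1] x := by
      intro s
      rw [Function.iterate_succ_apply']
    rw [Finset.sum_congr rfl fun s _ => hstep s]
    have h1 := Finset.sum_range_succ' (fun s => f^[s] x) p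
    have h2 := Finset.sum_range_succ (fun s => f^[s] x) p
    have h3 : (∑ s ∈ Finset.range p, f^[s + 1] x) + f^[0] x
        = (∑ s ∈ Finset.range p, f^[s] x) + f^[p] x := by
      rw [← h1, ← h2]
    rw [Function.iterate_zero_apply, hper] at h3
    exact add_right_cancel h3
  have hy0 : y = 0 := hfix y hfy
  obtain ⟨l, hl⟩ := Function.ne_iff.mp hx0
  have hyl : x l ≤ y l := by
    rw [hy]
    rw [Finset.sum_apply]
    have : x l = (fun s => f^[s] x l) 0 := rfl
    rw [this]
    refine Finset.single_le_sum (f := fun s => f^[s] x l) (fun s _ => hnn s l) ?_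
    simpa using hppos
  have : y l = 0 := by rw [hy0]; rfl
  have := hxnn l
  have : x l ≠ 0 := by simpa using hl
  omega

end CoxAux

/-- Let `C` be a symmetrizable generalized Cartan matrix of Dynkin type (`q_C` positive
definite) with Coxeter transformation `c = sₙ⋯s₁`.  Then for every nonzero `x ∈ ℕⁿ` there is
`s ≥ 0` with `cˢ(x) > 0` but `c^{s+1}(x) ≱ 0` componentwise, and similarly there is `t ≥ 0`
with `c^{−t}(x) > 0` but `c^{−t−1}(x) ≱ 0`. -/
theorem coxeter_orbit_leaves_positive_cone (n : ℕ)
    (C : Matrix (Fin n) (Fin n) ℤ) (c : Fin n → ℤ)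
    (hdiag : ∀ i, C i i = 2)
    (hoff : ∀ i j, i ≠ j → C i j ≤ 0)
    (hzero : ∀ i j, C i j = 0 ↔ C j i = 0)
    (hc : ∀ i, 0 < c i)
    (hsym : ∀ i j, c i * C i j = c j * C j i)
    (hposdef : ∀ x : Fin n → ℤ, x ≠ 0 → 0 < cartanQuadForm n C c x)
    (x : Fin n → ℤ) (hx0 : x ≠ 0) (hxnn : ∀ l, 0 ≤ x l) :
    (∃ s : ℕ, (∀ l, 0 ≤ (coxeterPlus n C)^[s] x l) ∧ (coxeterPlus n C)^[s] x ≠ 0 ∧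
        ¬ (∀ l, 0 ≤ (coxeterPlus n C)^[s + 1] x l)) ∧
    (∃ t : ℕ, (∀ l, 0 ≤ (coxeterMinus n C)^[t] x l) ∧ (coxeterMinus n C)^[t] x ≠ 0 ∧
        ¬ (∀ l, 0 ≤ (coxeterMinus n C)^[t + 1] x l)) := by
  constructor
  · exact CoxAux.main_half n C c hdiag hoff hsym hposdef (coxeterPlus n C)
      (CoxAux.coxeterPlus_add n C)
      ((show Function.LeftInverse (coxeterMinus n C) (coxeterPlus n C) from
        fun v => CoxAux.coxeterMinus_coxeterPlus n C hdiag v).injective)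
      (fun v => CoxAux.B_coxeterPlus n C c hdiag hsym v)
      (fun y hy => CoxAux.coxeterPlus_fixed_eq_zero n C c hdiag hoff hsym hposdef y hy)
      x hx0 hxnn
  · exact CoxAux.main_half n C c hdiag hoff hsym hposdef (coxeterMinus n C)
      (CoxAux.coxeterMinus_add n C)
      ((show Function.LeftInverse (coxeterPlus n C) (coxeterMinus n C) from
        fun v => CoxAux.coxeterPlus_coxeterMinus n C hdiag v).injective)
      (fun v => CoxAux.B_coxeterMinus n C c hdiag hsym v)
      (fun y hy => CoxAux.coxeterMinus_fixed_eq_zero n C c hdiag hoff hsym hposdef y hy)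
      x hx0 hxnn
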